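/- Let μ > 0 and p ∈ ℕ. Then there exists a unique real number Λ in the open interval (μ² + π²(1+p)²/4, μ² + π²(2+p)²/4) such that, writing s = √(Λ − μ²), one has [s·sin s·cosh μ + μ·sinh μ·cos s] · [s·cos s·sinh μ − μ·cosh μ·sin s] = 0. -/

import Mathlib

set_option maxHeartbeats 1000000


open Real

private lemma aux_sinh_lt_mul_cosh {μ : ℝ} (hμ : 0 < μ) : Real.sinh μ < μ * Real.cosh μ := by
  have key : StrictMonoOn (fun x : ℝ => x * Real.cosh x - Real.sinh x) (Set.Ici 0) := by
    apply strictMonoOn_of_deriv_pos (convex_Ici 0)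
    · exact ((continuous_id.mul Real.continuous_cosh).sub Real.continuous_sinh).continuousOn
    · intro x hx
      rw [interior_Ici, Set.mem_Ioi] at hx
      have h1 : HasDerivAt (fun x : ℝ => x * Real.cosh x - Real.sinh x)
          (1 * Real.sinh x * x + Real.cosh x * 1 - Real.cosh x) x := by
        have := ((Real.hasDerivAt_cosh x).mul (hasDerivAt_id x)).sub (Real.hasDerivAt_sinh x)
        have hf : (fun x : ℝ => x * Real.cosh x - Real.sinh x) = Real.cosh * id - Real.sinh := by
          funext y; simp only [Pi.sub_apply, Pi.mul_apply, id_eq]; ring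
        rw [hf]
        exact this.congr_deriv (by simp only [id_eq]; ring)
      rw [h1.deriv]
      have hs : 0 < Real.sinh x := Real.sinh_pos_iff.2 hx
      nlinarith
  have := key Set.self_mem_Ici (Set.mem_Ici.2 hμ.le) hμ
  simpa using this

private lemma aux_cos_ne (k : ℕ) {s : ℝ} (h1 : k * π / 2 < s) (h2 : s < (k + 1) * π / 2) :
    Real.cos s ≠ 0 := by
  intro hc
  obtain ⟨n, hn⟩ := Real.cos_eq_zero_iff.1 hc
  subst hn
  have hπ : (0 : ℝ) < π / 2 := by positivity
  have h1' : (k : ℝ) < 2 * n + 1 := by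
    have : (k : ℝ) * (π / 2) < (2 * n + 1) * (π / 2) := by ring_nf; ring_nf at h1; linarith
    exact lt_of_mul_lt_mul_right this hπ.le
  have h2' : (2 * (n : ℝ) + 1) < k + 1 := by
    have : (2 * (n : ℝ) + 1) * (π / 2) < (k + 1) * (π / 2) := by ring_nf; ring_nf at h2; linarith
    exact lt_of_mul_lt_mul_right this hπ.le
  have hk1 : (k : ℤ) < 2 * n + 1 := by exact_mod_cast h1'
  have hk2 : (2 * n + 1 : ℤ) < k + 1 := by exact_mod_cast h2'
  omega

private lemma aux_sincos_sign (k : ℕ) {s : ℝ} (h1 : k * π / 2 < s) (h2 : s < (k + 1) * π / 2) :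
    0 < (-1) ^ k * (Real.sin s * Real.cos s) := by
  have hy1 : 0 < 2 * s - k * π := by linarith
  have hy2 : 2 * s - k * π < π := by linarith
  have hpos : 0 < Real.sin (2 * s - k * π) := Real.sin_pos_of_pos_of_lt_pi hy1 hy2
  have hcosk : Real.cos ((k : ℝ) * π) = (-1) ^ k := by
    have := Real.cos_nat_mul_pi_sub 0 k
    simpa using this
  have hsin2 : Real.sin (2 * s) = (-1) ^ k * Real.sin (2 * s - k * π) := by
    have h : (2 : ℝ) * s = (2 * s - k * π) + k * π := by ring
    rw [h, Real.sin_add, Real.sin_nat_mul_pi, hcosk]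
    ring
  have htwo : Real.sin (2 * s) = 2 * (Real.sin s * Real.cos s) := by
    rw [Real.sin_two_mul]; ring
  have hsq : ((-1 : ℝ)) ^ k * (-1) ^ k = 1 := by
    rw [← pow_add, ← two_mul]
    exact Even.neg_one_pow ⟨k, by ring⟩
  have key : ((-1 : ℝ)) ^ k * (Real.sin s * Real.cos s)
      = Real.sin (2 * s - k * π) / 2 := by
    calc ((-1 : ℝ)) ^ k * (Real.sin s * Real.cos s)
        = (-1) ^ k * Real.sin (2 * s) / 2 := by rw [htwo]; ring
      _ = ((-1) ^ k * (-1) ^ k) * Real.sin (2 * s - k * π) / 2 := by rw [hsin2]; ring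
      _ = Real.sin (2 * s - k * π) / 2 := by rw [hsq]; ring
  rw [key]
  linarith

private lemma aux_omega_mono (μ a : ℝ) (ha : π / 2 ≤ a)
    (hc : ∀ s ∈ Set.Ioo a (a + π / 2), Real.cos s ≠ 0) :
    StrictMonoOn (fun s => s * Real.tan s * Real.cosh μ + μ * Real.sinh μ)
      (Set.Ioo a (a + π / 2)) := by
  apply strictMonoOn_of_deriv_pos (convex_Ioo _ _)
  · apply ContinuousOn.add _ continuousOn_const
    apply ContinuousOn.mul _ continuousOn_const
    intro x hx
    exact (continuousAt_id.mul (Real.continuousAt_tan.2 (hc x hx))).continuousWithinAt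
  · intro x hx
    rw [interior_Ioo] at hx
    have hcx := hc x hx
    have hd : HasDerivAt (fun s => s * Real.tan s * Real.cosh μ + μ * Real.sinh μ)
        ((1 * Real.tan x + x * (1 / Real.cos x ^ 2)) * Real.cosh μ) x :=
      (((hasDerivAt_id x).mul (Real.hasDerivAt_tan hcx)).mul_const _).add_const _
    rw [hd.deriv]
    have hcos2 : 0 < Real.cos x ^ 2 := by positivity
    have key : 1 * Real.tan x + x * (1 / Real.cos x ^ 2)
        = (Real.sin x * Real.cos x + x) / Real.cos x ^ 2 := by
      rw [Real.tan_eq_sin_div_cos]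
      field_simp
      try ring
    rw [key]
    have h1 : 0 < Real.sin x * Real.cos x + x := by
      nlinarith [Real.sin_sq_add_cos_sq x, sq_nonneg (Real.sin x + Real.cos x),
        Real.pi_gt_three, hx.1, ha]
    exact mul_pos (div_pos h1 hcos2) (Real.cosh_pos μ)

private lemma aux_chi_mono (μ a : ℝ) (hμ : 0 < μ)
    (hc : ∀ s ∈ Set.Ioo a (a + π / 2), Real.cos s ≠ 0) :
    StrictMonoOn (fun s => μ * Real.cosh μ * Real.tan s - s * Real.sinh μ)
      (Set.Ioo a (a + π / 2)) := by
  apply strictMonoOn_of_deriv_pos (convex_Ioo _ _)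
  · apply ContinuousOn.sub
    · apply ContinuousOn.mul continuousOn_const
      intro x hx
      exact (Real.continuousAt_tan.2 (hc x hx)).continuousWithinAt
    · exact (continuous_id.mul continuous_const).continuousOn
  · intro x hx
    rw [interior_Ioo] at hx
    have hcx := hc x hx
    have hd : HasDerivAt (fun s => μ * Real.cosh μ * Real.tan s - s * Real.sinh μ)
        (μ * Real.cosh μ * (1 / Real.cos x ^ 2) - 1 * Real.sinh μ) x :=
      ((Real.hasDerivAt_tan hcx).const_mul _).sub ((hasDerivAt_id x).mul_const _)
    rw [hd.deriv]
    have hcos2 : 0 < Real.cos x ^ 2 := by positivity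
    have hcle : Real.cos x ^ 2 ≤ 1 := by
      nlinarith [Real.sin_sq_add_cos_sq x, sq_nonneg (Real.sin x)]
    have h2 : 1 ≤ 1 / Real.cos x ^ 2 := by
      rw [le_div_iff₀ hcos2]; linarith
    have h3 : μ * Real.cosh μ ≤ μ * Real.cosh μ * (1 / Real.cos x ^ 2) :=
      le_mul_of_one_le_right (by positivity) h2
    have h4 := aux_sinh_lt_mul_cosh hμ
    linarith

private lemma aux_unique_g (μ a : ℝ) (hμ : 0 < μ) (ha : π / 2 ≤ a) (hca : Real.cos a = 0)
    (hsc : ∀ s ∈ Set.Ioo a (a + π / 2), Real.sin s * Real.cos s < 0) :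
    ∃! s : ℝ, s ∈ Set.Ioo a (a + π / 2) ∧
      (s * Real.sin s * Real.cosh μ + μ * Real.sinh μ * Real.cos s) *
        (s * Real.cos s * Real.sinh μ - μ * Real.cosh μ * Real.sin s) = 0 := by
  have hπ : (0 : ℝ) < π := Real.pi_pos
  have ha0 : 0 < a := lt_of_lt_of_le (by positivity) ha
  set G : ℝ → ℝ := fun s => s * Real.sin s * Real.cosh μ + μ * Real.sinh μ * Real.cos s with hG
  set H : ℝ → ℝ := fun s => s * Real.cos s * Real.sinh μ - μ * Real.cosh μ * Real.sin s with hH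
  have hc : ∀ s ∈ Set.Ioo a (a + π / 2), Real.cos s ≠ 0 := by
    intro s hs hcs
    have := hsc s hs
    rw [hcs] at this
    simp at this
  have hHne : ∀ s ∈ Set.Ioo a (a + π / 2), H s ≠ 0 := by
    intro s hs hzero
    have hsc' := hsc s hs
    have hcs := hc s hs
    have hcos2 : 0 < Real.cos s ^ 2 := by positivity
    have hspos : 0 < s := lt_trans ha0 hs.1
    have : 0 < H s * Real.cos s := by
      have : H s * Real.cos s
          = s * Real.cos s ^ 2 * Real.sinh μ - μ * Real.cosh μ * (Real.sin s * Real.cos s) := by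
        simp only [hH]; ring
      rw [this]
      have h1 : 0 < s * Real.cos s ^ 2 * Real.sinh μ := by
        have := Real.sinh_pos_iff.2 hμ; positivity
      have h2 : 0 < μ * Real.cosh μ * (-(Real.sin s * Real.cos s)) :=
        mul_pos (mul_pos hμ (Real.cosh_pos μ)) (by linarith)
      nlinarith
    rw [hzero] at this
    simp at this
  -- values at endpoints
  have hsina : Real.sin a ^ 2 = 1 := by
    nlinarith [Real.sin_sq_add_cos_sq a]
  have hGa : G a = a * Real.sin a * Real.cosh μ := by simp [hG, hca]
  have hGb : G (a + π / 2) = -(μ * Real.sinh μ * Real.sin a) := by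
    simp only [hG]
    rw [Real.sin_add_pi_div_two, Real.cos_add_pi_div_two, hca]
    ring
  have hprod : G a * G (a + π / 2) < 0 := by
    rw [hGa, hGb]
    have h1 : 0 < Real.sinh μ := Real.sinh_pos_iff.2 hμ
    have h2 : 0 < Real.cosh μ := Real.cosh_pos μ
    have h3 : a * Real.sin a * Real.cosh μ * -(μ * Real.sinh μ * Real.sin a)
        = -(a * μ * Real.cosh μ * Real.sinh μ) * Real.sin a ^ 2 := by ring
    rw [h3, hsina]
    have h4 : 0 < a * μ * Real.cosh μ * Real.sinh μ := by positivity
    linarith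
  -- continuity of G
  have hGcont : Continuous G := by
    simp only [hG]
    exact ((continuous_id.mul Real.continuous_sin).mul continuous_const).add
      (continuous_const.mul Real.continuous_cos)
  have hab : a ≤ a + π / 2 := by linarith
  -- existence
  have hex : ∃ s ∈ Set.Ioo a (a + π / 2), G s = 0 := by
    rcases lt_or_gt_of_ne (fun h : G a = 0 => by rw [h] at hprod; simp at hprod) with hneg | hpos
    · have hposb : 0 < G (a + π / 2) := by
        by_contra hle
        push_neg at hle
        nlinarith [mul_nonneg (neg_nonneg.2 hneg.le) (neg_nonneg.2 hle)]
      have := intermediate_value_Ioo hab hGcont.continuousOn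
        (Set.mem_Ioo.2 ⟨hneg, hposb⟩)
      obtain ⟨s, hs, hs0⟩ := this
      exact ⟨s, hs, hs0⟩
    · have hnegb : G (a + π / 2) < 0 := by
        by_contra hle
        push_neg at hle
        nlinarith [mul_nonneg hpos.le hle]
      have := intermediate_value_Ioo' hab hGcont.continuousOn
        (Set.mem_Ioo.2 ⟨hnegb, hpos⟩)
      obtain ⟨s, hs, hs0⟩ := this
      exact ⟨s, hs, hs0⟩
  obtain ⟨s₀, hs₀mem, hs₀⟩ := hex
  -- uniqueness via strict monotonicity of ω
  have hmono := aux_omega_mono μ a ha hc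
  have hGfact : ∀ s ∈ Set.Ioo a (a + π / 2), G s = 0 →
      s * Real.tan s * Real.cosh μ + μ * Real.sinh μ = 0 := by
    intro s hs h0
    have hcs := hc s hs
    have : Real.cos s * (s * Real.tan s * Real.cosh μ + μ * Real.sinh μ) = G s := by
      simp only [hG]
      rw [Real.tan_eq_sin_div_cos]
      field_simp
      try ring
    rw [h0] at this
    exact (mul_eq_zero.1 this).resolve_left hcs
  refine ⟨s₀, ⟨hs₀mem, ?_⟩, ?_⟩
  · show G s₀ * H s₀ = 0
    rw [hs₀, zero_mul]
  rintro t ⟨htmem, hteq⟩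
  have hGt : G t = 0 := by
    rcases mul_eq_zero.1 hteq with h | h
    · exact h
    · exact absurd h (hHne t htmem)
  have h1 := hGfact t htmem hGt
  have h2 := hGfact s₀ hs₀mem hs₀
  exact hmono.injOn htmem hs₀mem (by rw [h1, h2])

private lemma aux_unique_h (μ a : ℝ) (hμ : 0 < μ) (ha : π / 2 ≤ a) (hsa : Real.sin a = 0)
    (hsc : ∀ s ∈ Set.Ioo a (a + π / 2), 0 < Real.sin s * Real.cos s) :
    ∃! s : ℝ, s ∈ Set.Ioo a (a + π / 2) ∧
      (s * Real.sin s * Real.cosh μ + μ * Real.sinh μ * Real.cos s) *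
        (s * Real.cos s * Real.sinh μ - μ * Real.cosh μ * Real.sin s) = 0 := by
  have hπ : (0 : ℝ) < π := Real.pi_pos
  have ha0 : 0 < a := lt_of_lt_of_le (by positivity) ha
  set G : ℝ → ℝ := fun s => s * Real.sin s * Real.cosh μ + μ * Real.sinh μ * Real.cos s with hG
  set H : ℝ → ℝ := fun s => s * Real.cos s * Real.sinh μ - μ * Real.cosh μ * Real.sin s with hH
  have hc : ∀ s ∈ Set.Ioo a (a + π / 2), Real.cos s ≠ 0 := by
    intro s hs hcs
    have := hsc s hs
    rw [hcs] at this
    simp at this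
  have hGne : ∀ s ∈ Set.Ioo a (a + π / 2), G s ≠ 0 := by
    intro s hs hzero
    have hsc' := hsc s hs
    have hcs := hc s hs
    have hcos2 : 0 < Real.cos s ^ 2 := by positivity
    have hspos : 0 < s := lt_trans ha0 hs.1
    have : 0 < G s * Real.cos s := by
      have : G s * Real.cos s
          = s * (Real.sin s * Real.cos s) * Real.cosh μ + μ * Real.sinh μ * Real.cos s ^ 2 := by
        simp only [hG]; ring
      rw [this]
      have h1 : 0 < μ * Real.sinh μ * Real.cos s ^ 2 := by
        have := Real.sinh_pos_iff.2 hμ; positivity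
      have h2 : 0 < s * (Real.sin s * Real.cos s) * Real.cosh μ :=
        mul_pos (mul_pos hspos hsc') (Real.cosh_pos μ)
      nlinarith
    rw [hzero] at this
    simp at this
  have hcosa : Real.cos a ^ 2 = 1 := by
    nlinarith [Real.sin_sq_add_cos_sq a]
  have hHa : H a = a * Real.cos a * Real.sinh μ := by simp [hH, hsa]
  have hHb : H (a + π / 2) = -(μ * Real.cosh μ * Real.cos a) := by
    simp only [hH]
    rw [Real.sin_add_pi_div_two, Real.cos_add_pi_div_two, hsa]
    ring
  have hprod : H a * H (a + π / 2) < 0 := by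
    rw [hHa, hHb]
    have h1 : 0 < Real.sinh μ := Real.sinh_pos_iff.2 hμ
    have h2 : 0 < Real.cosh μ := Real.cosh_pos μ
    have h3 : a * Real.cos a * Real.sinh μ * -(μ * Real.cosh μ * Real.cos a)
        = -(a * μ * Real.cosh μ * Real.sinh μ) * Real.cos a ^ 2 := by ring
    rw [h3, hcosa]
    have h4 : 0 < a * μ * Real.cosh μ * Real.sinh μ := by positivity
    linarith
  have hHcont : Continuous H := by
    simp only [hH]
    exact ((continuous_id.mul Real.continuous_cos).mul continuous_const).sub
      (continuous_const.mul Real.continuous_sin)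
  have hab : a ≤ a + π / 2 := by linarith
  have hex : ∃ s ∈ Set.Ioo a (a + π / 2), H s = 0 := by
    rcases lt_or_gt_of_ne (fun h : H a = 0 => by rw [h] at hprod; simp at hprod) with hneg | hpos
    · have hposb : 0 < H (a + π / 2) := by
        by_contra hle
        push_neg at hle
        nlinarith [mul_nonneg (neg_nonneg.2 hneg.le) (neg_nonneg.2 hle)]
      obtain ⟨s, hs, hs0⟩ := intermediate_value_Ioo hab hHcont.continuousOn
        (Set.mem_Ioo.2 ⟨hneg, hposb⟩)
      exact ⟨s, hs, hs0⟩
    · have hnegb : H (a + π / 2) < 0 := by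
        by_contra hle
        push_neg at hle
        nlinarith [mul_nonneg hpos.le hle]
      obtain ⟨s, hs, hs0⟩ := intermediate_value_Ioo' hab hHcont.continuousOn
        (Set.mem_Ioo.2 ⟨hnegb, hpos⟩)
      exact ⟨s, hs, hs0⟩
  obtain ⟨s₀, hs₀mem, hs₀⟩ := hex
  have hmono := aux_chi_mono μ a hμ hc
  have hHfact : ∀ s ∈ Set.Ioo a (a + π / 2), H s = 0 →
      μ * Real.cosh μ * Real.tan s - s * Real.sinh μ = 0 := by
    intro s hs h0
    have hcs := hc s hs
    have : Real.cos s * -(μ * Real.cosh μ * Real.tan s - s * Real.sinh μ) = H s := by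
      simp only [hH]
      rw [Real.tan_eq_sin_div_cos]
      field_simp
      try ring
    rw [h0] at this
    have := (mul_eq_zero.1 this).resolve_left hcs
    linarith [this]
  refine ⟨s₀, ⟨hs₀mem, ?_⟩, ?_⟩
  · show G s₀ * H s₀ = 0
    rw [hs₀, mul_zero]
  rintro t ⟨htmem, hteq⟩
  have hHt : H t = 0 := by
    rcases mul_eq_zero.1 hteq with h | h
    · exact absurd h (hGne t htmem)
    · exact h
  have h1 := hHfact t htmem hHt
  have h2 := hHfact s₀ hs₀mem hs₀
  exact hmono.injOn htmem hs₀mem (by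
    show μ * Real.cosh μ * Real.tan t - t * Real.sinh μ
      = μ * Real.cosh μ * Real.tan s₀ - s₀ * Real.sinh μ
    rw [h1, h2])

private lemma aux_core (μ : ℝ) (hμ : 0 < μ) (k : ℕ) (hk : 1 ≤ k) :
    ∃! s : ℝ, s ∈ Set.Ioo ((k : ℝ) * π / 2) (((k : ℝ) + 1) * π / 2) ∧
      (s * Real.sin s * Real.cosh μ + μ * Real.sinh μ * Real.cos s) *
        (s * Real.cos s * Real.sinh μ - μ * Real.cosh μ * Real.sin s) = 0 := by
  have hπ : (0 : ℝ) < π := Real.pi_pos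
  have hb : ((k : ℝ) + 1) * π / 2 = (k : ℝ) * π / 2 + π / 2 := by ring
  have ha : π / 2 ≤ (k : ℝ) * π / 2 := by
    have : (1 : ℝ) ≤ (k : ℝ) := by exact_mod_cast hk
    nlinarith
  rw [hb]
  rcases Nat.even_or_odd k with ⟨m, hm⟩ | ⟨m, hm⟩
  · -- k even: sin a = 0, sin·cos > 0 on interior
    apply aux_unique_h μ _ hμ ha
    · have : (k : ℝ) * π / 2 = (m : ℝ) * π := by
        rw [hm]; push_cast; ring
      rw [this]
      exact Real.sin_nat_mul_pi m
    · intro s hs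
      have h1 : (k : ℝ) * π / 2 < s := hs.1
      have h2 : s < ((k : ℝ) + 1) * π / 2 := by rw [hb]; exact hs.2
      have := aux_sincos_sign k h1 h2
      have hkeven : ((-1 : ℝ)) ^ k = 1 := Even.neg_one_pow ⟨m, by omega⟩
      rw [hkeven] at this
      linarith
  · -- k odd: cos a = 0, sin·cos < 0 on interior
    apply aux_unique_g μ _ hμ ha
    · have : (k : ℝ) * π / 2 = (m : ℝ) * π + π / 2 := by
        rw [hm]; push_cast; ring
      rw [this, Real.cos_add_pi_div_two]
      simp [Real.sin_nat_mul_pi]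
    · intro s hs
      have h1 : (k : ℝ) * π / 2 < s := hs.1
      have h2 : s < ((k : ℝ) + 1) * π / 2 := by rw [hb]; exact hs.2
      have := aux_sincos_sign k h1 h2
      have hkodd : ((-1 : ℝ)) ^ k = -1 := Odd.neg_one_pow ⟨m, by omega⟩
      rw [hkodd] at this
      linarith

/-- Dirichlet (β → ∞) case: for μ > 0 and p ∈ ℕ there is a unique Λ in
(μ² + π²(1+p)²/4, μ² + π²(2+p)²/4) satisfying, with s = √(Λ − μ²),
[s sin s cosh μ + μ sinh μ cos s]·[s cos s sinh μ − μ cosh μ sin s] = 0. -/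
theorem stmt_2 (μ : ℝ) (hμ : 0 < μ) (p : ℕ) :
    ∃! Λ : ℝ,
      Λ ∈ Set.Ioo (μ ^ 2 + π ^ 2 * (1 + (p : ℝ)) ^ 2 / 4)
        (μ ^ 2 + π ^ 2 * (2 + (p : ℝ)) ^ 2 / 4) ∧
      (Real.sqrt (Λ - μ ^ 2) * Real.sin (Real.sqrt (Λ - μ ^ 2)) * Real.cosh μ +
          μ * Real.sinh μ * Real.cos (Real.sqrt (Λ - μ ^ 2))) *
        (Real.sqrt (Λ - μ ^ 2) * Real.cos (Real.sqrt (Λ - μ ^ 2)) * Real.sinh μ -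
          μ * Real.cosh μ * Real.sin (Real.sqrt (Λ - μ ^ 2))) = 0 := by
  have hπ : (0 : ℝ) < π := Real.pi_pos
  obtain ⟨s₀, ⟨hs₀mem, hs₀eq⟩, huniq⟩ := aux_core μ hμ (p + 1) (by omega)
  have hcast : ((p + 1 : ℕ) : ℝ) = 1 + (p : ℝ) := by push_cast; ring
  have ha : (1 + (p : ℝ)) * π / 2 < s₀ := by rw [← hcast]; exact hs₀mem.1
  have hbb : s₀ < (2 + (p : ℝ)) * π / 2 := by
    have := hs₀mem.2
    rw [hcast] at this
    calc s₀ < (1 + (p : ℝ) + 1) * π / 2 := this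
    _ = (2 + (p : ℝ)) * π / 2 := by ring
  have hapos : 0 < (1 + (p : ℝ)) * π / 2 := by positivity
  have hs₀pos : 0 < s₀ := lt_trans hapos ha
  have haeq : π ^ 2 * (1 + (p : ℝ)) ^ 2 / 4 = ((1 + (p : ℝ)) * π / 2) ^ 2 := by ring
  have hbeq : π ^ 2 * (2 + (p : ℝ)) ^ 2 / 4 = ((2 + (p : ℝ)) * π / 2) ^ 2 := by ring
  refine ⟨μ ^ 2 + s₀ ^ 2, ⟨?_, ?_⟩, ?_⟩
  · constructor
    · rw [haeq]
      have : ((1 + (p : ℝ)) * π / 2) ^ 2 < s₀ ^ 2 := by nlinarith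
      linarith
    · rw [hbeq]
      have : s₀ ^ 2 < ((2 + (p : ℝ)) * π / 2) ^ 2 := by nlinarith
      linarith
  · have : Real.sqrt (μ ^ 2 + s₀ ^ 2 - μ ^ 2) = s₀ := by
      rw [show μ ^ 2 + s₀ ^ 2 - μ ^ 2 = s₀ ^ 2 by ring, Real.sqrt_sq hs₀pos.le]
    rw [this]
    exact hs₀eq
  · rintro Λ ⟨hmem, heq⟩
    set s := Real.sqrt (Λ - μ ^ 2) with hs
    have h1 : ((1 + (p : ℝ)) * π / 2) ^ 2 < Λ - μ ^ 2 := by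
      have := hmem.1; rw [haeq] at this; linarith
    have h2 : Λ - μ ^ 2 < ((2 + (p : ℝ)) * π / 2) ^ 2 := by
      have := hmem.2; rw [hbeq] at this; linarith
    have hΛpos : 0 ≤ Λ - μ ^ 2 := le_of_lt (lt_of_le_of_lt (sq_nonneg _) h1)
    have hslb : (1 + (p : ℝ)) * π / 2 < s := by
      rw [hs]
      exact (Real.lt_sqrt hapos.le).2 h1
    have hsub : s < (2 + (p : ℝ)) * π / 2 := by
      rw [hs]
      exact (Real.sqrt_lt' (by positivity)).2 h2
    have hsmem : s ∈ Set.Ioo (((p + 1 : ℕ) : ℝ) * π / 2) ((((p + 1 : ℕ) : ℝ) + 1) * π / 2) := by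
      constructor
      · rw [hcast]; exact hslb
      · rw [hcast]; calc s < (2 + (p : ℝ)) * π / 2 := hsub
        _ = (1 + (p : ℝ) + 1) * π / 2 := by ring
    have hseq := huniq s ⟨hsmem, heq⟩
    have : Λ - μ ^ 2 = s ^ 2 := by
      rw [hs, Real.sq_sqrt hΛpos]
    rw [hseq] at this
    linarith
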